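/- Suppose 1 < γ ≤ 2, let s(t) be a survival function with c₀ = (∫₀^∞ e^{-rt}s(t)dt)^{-1} finite, r > 0, and define the indifference loading δ by (1-δ)^{1-γ} c₀^{-γ} = (∫₀^∞ e^{-rt} β_{n,γ}(s(t))^{1/γ} dt)^γ. Then δ < (1/n)(c₀/r - 1). -/

import Mathlib

open Finset MeasureTheory Set

/-- θ_{n,γ}(p) = E[(N(p)/n)^{γ-1}] where N(p) - 1 ~ Bin(n-1, p). -/
noncomputable def theta (n : ℕ) (γ p : ℝ) : ℝ :=
  ∑ k ∈ Finset.range n,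
    ((n - 1).choose k : ℝ) * p ^ k * (1 - p) ^ (n - 1 - k) * ((n : ℝ) / (k + 1)) ^ (1 - γ)

/-- β_{n,γ}(p) = p · θ_{n,γ}(p). -/
noncomputable def beta (n : ℕ) (γ p : ℝ) : ℝ := p * theta n γ p


lemma binom_sum (m : ℕ) (p : ℝ) :
    ∑ k ∈ Finset.range (m + 1), (m.choose k : ℝ) * p ^ k * (1 - p) ^ (m - k) = 1 := by
  have h := add_pow p (1 - p) m
  have hp : p + (1 - p) = 1 := by ring
  rw [hp, one_pow] at h
  calc ∑ k ∈ Finset.range (m + 1), (m.choose k : ℝ) * p ^ k * (1 - p) ^ (m - k)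
      = ∑ k ∈ Finset.range (m + 1), p ^ k * (1 - p) ^ (m - k) * (m.choose k : ℝ) :=
        Finset.sum_congr rfl fun k _ => by ring
    _ = 1 := h.symm

lemma choose_mul_succ (m k : ℕ) :
    ((m + 1).choose (k + 1) : ℝ) * (k + 1) = (m + 1) * (m.choose k : ℝ) := by
  have h : (m + 1) * m.choose k = (m + 1).choose (k + 1) * (k + 1) := Nat.add_one_mul_choose_eq m k
  exact_mod_cast h.symm

lemma binom_mean (m : ℕ) (p : ℝ) :
    ∑ k ∈ Finset.range (m + 1), (m.choose k : ℝ) * p ^ k * (1 - p) ^ (m - k) * k = m * p := by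
  cases m with
  | zero => simp
  | succ m =>
    rw [Finset.sum_range_succ']
    have h1 : ∀ k ∈ Finset.range (m + 1),
        ((m + 1).choose (k + 1) : ℝ) * p ^ (k + 1) * (1 - p) ^ (m + 1 - (k + 1)) * ((k : ℕ) + 1 : ℕ)
          = ((m : ℝ) + 1) * p * ((m.choose k : ℝ) * p ^ k * (1 - p) ^ (m - k)) := by
      intro k _
      rw [Nat.succ_sub_succ]
      have hc := choose_mul_succ m k
      push_cast
      push_cast at hc
      linear_combination (p ^ (k + 1) * (1 - p) ^ (m - k)) * hc
    rw [Finset.sum_congr rfl h1, ← Finset.mul_sum, binom_sum]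
    push_cast
    ring

lemma theta_nonneg (n : ℕ) {γ p : ℝ} (hp0 : 0 ≤ p) (hp1 : p ≤ 1) : 0 ≤ theta n γ p := by
  refine Finset.sum_nonneg fun k _ => ?_
  have : (0:ℝ) ≤ ((n:ℝ) / (k + 1)) ^ (1 - γ) := Real.rpow_nonneg (by positivity) _
  have h1p : (0:ℝ) ≤ 1 - p := by linarith
  positivity

lemma theta_le (n : ℕ) (hn : 1 ≤ n) {γ p : ℝ} (hγ1 : 1 < γ) (hγ2 : γ ≤ 2)
    (hp0 : 0 ≤ p) (hp1 : p ≤ 1) :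
    theta n γ p ≤ ((1 + ((n : ℝ) - 1) * p) / n) ^ (γ - 1) := by
  obtain ⟨m, rfl⟩ : ∃ m, n = m + 1 := ⟨n - 1, (Nat.succ_pred_eq_of_pos hn).symm⟩
  have hnpos : (0:ℝ) < (m:ℝ) + 1 := by positivity
  set w : ℕ → ℝ := fun k => (m.choose k : ℝ) * p ^ k * (1 - p) ^ (m - k) with hw
  set x : ℕ → ℝ := fun k => ((k:ℝ) + 1) / ((m:ℝ) + 1) with hx
  have h1p : (0:ℝ) ≤ 1 - p := by linarith
  have hw0 : ∀ k ∈ Finset.range (m + 1), 0 ≤ w k := fun k _ => by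
    simp only [hw]; positivity
  have hw1 : ∑ k ∈ Finset.range (m + 1), w k = 1 := binom_sum m p
  have hconc : ConcaveOn ℝ (Ici 0) (fun y : ℝ => y ^ (γ - 1)) :=
    Real.concaveOn_rpow (by linarith) (by linarith)
  have hmem : ∀ k ∈ Finset.range (m + 1), x k ∈ Ici (0:ℝ) := fun k _ =>
    Set.mem_Ici.mpr (by simp only [hx]; positivity)
  have hj := hconc.le_map_sum hw0 hw1 hmem
  have hsum : ∑ k ∈ Finset.range (m + 1), w k • x k = (1 + (m:ℝ) * p) / ((m:ℝ) + 1) := by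
    have hterms : ∀ k ∈ Finset.range (m + 1), w k • x k
        = ((m.choose k : ℝ) * p ^ k * (1 - p) ^ (m - k) * (k:ℕ)
          + (m.choose k : ℝ) * p ^ k * (1 - p) ^ (m - k)) / ((m:ℝ) + 1) := fun k _ => by
      simp only [hw, hx, smul_eq_mul]; push_cast; ring
    rw [Finset.sum_congr rfl hterms, ← Finset.sum_div, Finset.sum_add_distrib,
      binom_mean, binom_sum]
    ring
  have hterm : ∀ k ∈ Finset.range (m + 1),
      w k • (x k) ^ (γ - 1)
        = (m.choose k : ℝ) * p ^ k * (1 - p) ^ (m - k) * (((m+1 : ℕ) : ℝ) / ((k:ℝ) + 1)) ^ (1 - γ) := by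
    intro k _
    have hb : (0:ℝ) < ((m+1 : ℕ) : ℝ) / ((k:ℝ) + 1) := by positivity
    have hxk : x k = (((m+1 : ℕ) : ℝ) / ((k:ℝ) + 1))⁻¹ := by
      simp only [hx]; push_cast; rw [inv_div]
    have : (((m+1 : ℕ) : ℝ) / ((k:ℝ) + 1)) ^ (1 - γ) = (x k) ^ (γ - 1) := by
      rw [show (1 - γ) = -(γ - 1) by ring, Real.rpow_neg hb.le,
        ← Real.inv_rpow (by positivity), ← hxk]
    rw [this, smul_eq_mul, hw]
  calc theta (m+1) γ p
      = ∑ k ∈ Finset.range (m + 1), w k • (x k) ^ (γ - 1) := by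
        rw [theta]
        refine Finset.sum_congr rfl fun k hk => ?_
        rw [hterm k hk]
        simp
    _ ≤ (∑ k ∈ Finset.range (m + 1), w k • x k) ^ (γ - 1) := hj
    _ = ((1 + ((m+1 : ℕ) - 1 : ℝ) * p) / (m+1 : ℕ)) ^ (γ - 1) := by
        rw [hsum]; push_cast; ring_nf

lemma beta_pow_le (n : ℕ) (hn : 1 ≤ n) {γ p : ℝ} (hγ1 : 1 < γ) (hγ2 : γ ≤ 2)
    (hp0 : 0 ≤ p) (hp1 : p ≤ 1) :
    (beta n γ p) ^ (1/γ) ≤ p + ((γ - 1) / (γ * n)) * (1 - p) := by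
  have hγ0 : (0:ℝ) < γ := by linarith
  have hn0 : (0:ℝ) < (n:ℝ) := by exact_mod_cast hn
  set q : ℝ := (1 + ((n : ℝ) - 1) * p) / n with hq
  have hq0 : 0 ≤ q := by
    have : (0:ℝ) ≤ (n:ℝ) - 1 := by simp; exact_mod_cast hn
    positivity
  have hb0 : 0 ≤ beta n γ p := mul_nonneg hp0 (theta_nonneg n hp0 hp1)
  have hble : beta n γ p ≤ p * q ^ (γ - 1) :=
    mul_le_mul_of_nonneg_left (theta_le n hn hγ1 hγ2 hp0 hp1) hp0
  have h1 : (beta n γ p) ^ (1/γ) ≤ (p * q ^ (γ - 1)) ^ (1/γ) :=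
    Real.rpow_le_rpow hb0 hble (by positivity)
  have h2 : (p * q ^ (γ - 1)) ^ (1/γ) = p ^ (1/γ) * q ^ ((γ - 1) * (1/γ)) := by
    rw [Real.mul_rpow hp0 (Real.rpow_nonneg hq0 _), ← Real.rpow_mul hq0]
  have h3 : p ^ (1/γ) * q ^ ((γ - 1) * (1/γ)) ≤ (1/γ) * p + ((γ - 1) * (1/γ)) * q := by
    have := Real.geom_mean_le_arith_mean2_weighted (by positivity : (0:ℝ) ≤ 1/γ)
      (mul_nonneg (by linarith) (by positivity) : (0:ℝ) ≤ (γ-1) * (1/γ)) hp0 hq0 (by field_simp; ring)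
    linarith [this]
  have h4 : (1/γ) * p + ((γ - 1) * (1/γ)) * q = p + ((γ - 1) / (γ * n)) * (1 - p) := by
    rw [hq]; field_simp; ring
  calc (beta n γ p) ^ (1/γ) ≤ (p * q ^ (γ - 1)) ^ (1/γ) := h1
    _ = p ^ (1/γ) * q ^ ((γ - 1) * (1/γ)) := h2
    _ ≤ (1/γ) * p + ((γ - 1) * (1/γ)) * q := h3
    _ = p + ((γ - 1) / (γ * n)) * (1 - p) := h4

theorem indifference_loading_bound
    (n : ℕ) (hn : 1 ≤ n) (γ r : ℝ) (hγ1 : 1 < γ) (hγ2 : γ ≤ 2) (hr : 0 < r)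
    (s : ℝ → ℝ) (hmeas : Measurable s)
    (hs : ∀ t : ℝ, 0 < t → 0 < s t ∧ s t < 1)
    (hint : IntegrableOn (fun t => Real.exp (-r * t) * s t) (Ioi 0))
    (hIpos : 0 < ∫ t in Ioi (0 : ℝ), Real.exp (-r * t) * s t)
    (hintOT : IntegrableOn (fun t => Real.exp (-r * t) * (beta n γ (s t)) ^ (1 / γ)) (Ioi 0))
    (hJpos : 0 < ∫ t in Ioi (0 : ℝ), Real.exp (-r * t) * (beta n γ (s t)) ^ (1 / γ))
    (c₀ δ : ℝ) (hc₀ : c₀ = (∫ t in Ioi (0 : ℝ), Real.exp (-r * t) * s t)⁻¹)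
    (hδ : δ = 1 - (c₀ * ∫ t in Ioi (0 : ℝ),
        Real.exp (-r * t) * (beta n γ (s t)) ^ (1 / γ)) ^ (γ / (1 - γ))) :
    δ < (1 / n) * (c₀ / r - 1) := by
  set I := ∫ t in Ioi (0:ℝ), Real.exp (-r * t) * s t with hI
  set J := ∫ t in Ioi (0:ℝ), Real.exp (-r * t) * (beta n γ (s t)) ^ (1 / γ) with hJ
  have hγ0 : (0:ℝ) < γ := by linarith
  have hn0 : (0:ℝ) < n := by exact_mod_cast hn
  set c : ℝ := (γ - 1) / (γ * n) with hc
  have hc0 : 0 < c := div_pos (by linarith) (by positivity)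
  have hexpint : IntegrableOn (fun t => Real.exp (-r * t)) (Ioi (0:ℝ)) :=
    exp_neg_integrableOn_Ioi 0 hr
  have hexpval : (∫ t in Ioi (0:ℝ), Real.exp (-r * t)) = 1 / r := by
    have h : (∫ t in Ioi (0:ℝ), Real.exp (-(r * t))) = r⁻¹ • ∫ x in Ioi (r * 0), Real.exp (-x) :=
      integral_comp_mul_left_Ioi (fun x => Real.exp (-x)) 0 hr
    rw [mul_zero, integral_exp_neg_Ioi_zero, smul_eq_mul, mul_one] at h
    simp only [neg_mul]
    rw [h, one_div]
  -- bound on J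
  have hJle : J ≤ (1 - c) * I + c * (1/r) := by
    have hgint : IntegrableOn
        (fun t => (1 - c) * (Real.exp (-r * t) * s t) + c * Real.exp (-r * t)) (Ioi 0) :=
      (hint.const_mul _).add (hexpint.const_mul _)
    have hmono : J ≤ ∫ t in Ioi (0:ℝ),
        ((1 - c) * (Real.exp (-r * t) * s t) + c * Real.exp (-r * t)) := by
      refine setIntegral_mono_on hintOT hgint measurableSet_Ioi fun t ht => ?_
      have hst := hs t ht
      have he : (0:ℝ) ≤ Real.exp (-r * t) := (Real.exp_pos _).le
      calc Real.exp (-r * t) * (beta n γ (s t)) ^ (1/γ)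
          ≤ Real.exp (-r * t) * (s t + c * (1 - s t)) :=
            mul_le_mul_of_nonneg_left (beta_pow_le n hn hγ1 hγ2 hst.1.le hst.2.le) he
        _ = (1 - c) * (Real.exp (-r * t) * s t) + c * Real.exp (-r * t) := by ring
    rw [integral_add (hint.const_mul _) (hexpint.const_mul _), integral_const_mul,
      integral_const_mul, hexpval] at hmono
    exact hmono
  -- strict: I < 1/r
  have hIlt : I < 1 / r := by
    have hdiffint : IntegrableOn
        (fun t => Real.exp (-r * t) - Real.exp (-r * t) * s t) (Ioi (0:ℝ)) := hexpint.sub hint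
    have hpos : 0 < ∫ t in Ioi (0:ℝ), (Real.exp (-r * t) - Real.exp (-r * t) * s t) := by
      rw [setIntegral_pos_iff_support_of_nonneg_ae ?_ hdiffint]
      · refine lt_of_lt_of_le ?_ (measure_mono
          (?_ : Ioi (0:ℝ) ⊆ Function.support (fun t => Real.exp (-r * t) - Real.exp (-r * t) * s t) ∩ Ioi 0))
        · simp [Real.volume_Ioi]
        · intro t ht
          have hst := hs t ht
          have he : (0:ℝ) < Real.exp (-r * t) := Real.exp_pos _
          refine ⟨?_, ht⟩
          simp only [Function.mem_support]
          nlinarith [hst.2, he]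
      · refine (ae_restrict_iff' measurableSet_Ioi).mpr (Filter.Eventually.of_forall fun t ht => ?_)
        have hst := hs t ht
        have he : (0:ℝ) < Real.exp (-r * t) := Real.exp_pos _
        have : (0:ℝ) ≤ Real.exp (-r * t) - Real.exp (-r * t) * s t := by nlinarith [hst.2, he]
        simpa using this
    rw [integral_sub hexpint hint, hexpval] at hpos
    linarith
  have hc₀pos : 0 < c₀ := by rw [hc₀]; exact inv_pos.mpr hIpos
  have hc₀I : c₀ * I = 1 := by rw [hc₀]; field_simp
  set a : ℝ := c₀ / r - 1 with ha
  clear_value a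
  have hc₀r : c₀ * (1/r) = a + 1 := by rw [ha]; ring
  have ha0 : 0 < a := by
    have h1 : 0 < c₀ * (1/r - I) := mul_pos hc₀pos (by linarith)
    have h2 : c₀ * (1/r - I) = (c₀ * (1/r)) - c₀ * I := mul_sub c₀ (1/r) I
    linarith [h1, h2, hc₀I, hc₀r]
  set x := c₀ * J with hx
  clear_value x
  have hx0 : 0 < x := hx ▸ mul_pos hc₀pos hJpos
  have hxle : x ≤ 1 + c * a := by
    have h := mul_le_mul_of_nonneg_left hJle hc₀pos.le
    have : c₀ * ((1 - c) * I + c * (1/r)) = (1 - c) * (c₀ * I) + c * (c₀ * (1/r)) := by ring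
    rw [this, hc₀I, hc₀r] at h
    rw [hx]; linarith
  set P := γ / (γ - 1) with hP
  clear_value P
  have hP1 : 1 ≤ P := by rw [hP, le_div_iff₀ (by linarith)]; linarith
  have hPpos : (0:ℝ) < P := by linarith
  have hPc : P * c = 1 / n := by
    have h2 : γ - 1 ≠ 0 := by linarith
    have h3 : (n:ℝ) ≠ 0 := ne_of_gt hn0
    rw [hP, hc]
    field_simp
  have hexps : γ / (1 - γ) = -P := by
    rw [hP, show (1 - γ) = -(γ - 1) by ring, div_neg]
  rw [hδ, hexps]
  have hna : (0:ℝ) < 1 / n * a := by positivity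
  rcases lt_trichotomy x 1 with hlt | heq | hgt
  · have h1 : 1 < x ^ (-P) :=
      (Real.one_lt_rpow_iff_of_pos hx0).mpr (Or.inr ⟨hlt, by linarith⟩)
    linarith
  · rw [heq, Real.one_rpow]; linarith
  · have hxinv : x ^ (-P) = (x⁻¹) ^ P := by
      rw [Real.rpow_neg hx0.le, ← Real.inv_rpow hx0.le]
    have hbern : 1 + P * (x⁻¹ - 1) ≤ (1 + (x⁻¹ - 1)) ^ P :=
      one_add_mul_self_le_rpow_one_add (by nlinarith [inv_pos.mpr hx0]) hP1
    have hsimp : (1 + (x⁻¹ - 1)) = x⁻¹ := by ring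
    rw [hsimp] at hbern
    have h5 : 1 - x ^ (-P) ≤ P * (1 - x⁻¹) := by rw [hxinv]; linarith
    have h6 : 1 - x⁻¹ < x - 1 := by
      have hxne : x ≠ 0 := ne_of_gt hx0
      have hid : x - 1 - (1 - x⁻¹) = (x - 1)^2 / x := by field_simp
      have hsq : 0 < (x - 1)^2 := pow_pos (by linarith) 2
      have : 0 < (x - 1)^2 / x := div_pos hsq hx0
      linarith
    have h7 : P * (x - 1) ≤ P * (c * a) :=
      mul_le_mul_of_nonneg_left (by linarith) hPpos.le
    have h8 : P * (c * a) = 1 / (n:ℝ) * a := by rw [← mul_assoc, hPc]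
    have h9 : P * (1 - x⁻¹) < P * (x - 1) := mul_lt_mul_of_pos_left h6 hPpos
    linarith
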